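/- In a cartesian differential category, D(f^{(n)})(x₀,…,xₙ, y₀,…,yₙ) = f^{(n+1)}(x₀,…,xₙ, y₀) + Σ_{i=1}^{n} f^{(n)}(x₀,…,x_{i-1}, y_i, x_{i+1},…,xₙ) for any maps x₀,…,xₙ,y₀,…,yₙ : X → A. -/

import Mathlib

universe u

open Finset

/-- Unordered partitions of `Fin n` into nonempty parts, as a `Finset`. -/
def partitions (n : ℕ) : Finset (Finset (Finset (Fin n))) :=
  Finset.univ.filter fun P =>
    (∅ ∉ P) ∧ ∀ i : Fin n, (P.filter fun s => i ∈ s).card = 1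

/-- Partial injections from `Fin m` to `Fin n` (partial isomorphisms `[m] ≃ [n]`). -/
def partialInjs (m n : ℕ) : Finset (Fin m → Option (Fin n)) :=
  Finset.univ.filter fun θ =>
    ∀ i j : Fin m, ∀ a : Fin n, θ i = some a → θ j = some a → i = j

/-- The arrangement (Notation 5) associated to a partial isomorphism `θ : [m] ≃ [n]`:
the tail of the list `x_{θ₍₁₎θ₍₂₎}`, i.e. everything after the leading entry `(0,0)`:
matched pairs `(i, θ i)`, then unmatched rows `(i, 0)`, then unmatched columns `(0, j)`. -/
def arrangeTail (m n : ℕ) (θ : Fin m → Option (Fin n)) :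
    List (Fin (m + 1) × Fin (n + 1)) :=
  ((List.finRange m).filterMap fun i => (θ i).map fun j => (i.succ, j.succ))
    ++ ((List.finRange m).filterMap fun i =>
          if θ i = none then some (i.succ, (0 : Fin (n + 1))) else none)
    ++ ((List.finRange n).filterMap fun j =>
          if ∀ i, θ i ≠ some j then some ((0 : Fin (m + 1)), j.succ) else none)

variable (k : Type u) [CommSemiring k]

/-- The data of a cartesian left-`k`-linear category. -/
structure CDCData where
  Obj : Type u
  Hom : Obj → Obj → Type u
  homAdd : ∀ A B, AddCommMonoid (Hom A B)
  homMod : ∀ A B, @Module k (Hom A B) inferInstance (homAdd A B)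
  id : ∀ A, Hom A A
  comp : ∀ {A B C}, Hom B C → Hom A B → Hom A C
  term : Obj
  toTerm : ∀ A, Hom A term
  prod : Obj → Obj → Obj
  fst : ∀ {A B}, Hom (prod A B) A
  snd : ∀ {A B}, Hom (prod A B) B
  pair : ∀ {Z A B}, Hom Z A → Hom Z B → Hom Z (prod A B)

variable {k}

instance (C : CDCData k) (A B : C.Obj) : AddCommMonoid (C.Hom A B) := C.homAdd A B
instance (C : CDCData k) (A B : C.Obj) : Module k (C.Hom A B) := C.homMod A B

namespace CDCData

/-- `dom A n` is the `(n+1)`-fold product `A × Aⁿ`, nested on the left. -/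
def dom (C : CDCData k) (A : C.Obj) : ℕ → C.Obj
  | 0 => A
  | n + 1 => C.prod (dom C A n) A

/-- Tupling of `n+1` generalized elements of `A` into `A × Aⁿ`. -/
def tupleD (C : CDCData k) {Z A : C.Obj} :
    (n : ℕ) → (Fin (n + 1) → C.Hom Z A) → C.Hom Z (C.dom A n)
  | 0, x => x 0
  | n + 1, x => C.pair (tupleD C n fun i => x i.castSucc) (x (Fin.last (n + 1)))

/-- Tupling of a head together with a list; the head of the list lands in the
*last* slot. -/
def tupList (C : CDCData k) {Z A : C.Obj} (x0 : C.Hom Z A) :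
    (L : List (C.Hom Z A)) → C.Hom Z (C.dom A L.length)
  | [] => x0
  | a :: L => C.pair (tupList C x0 L) a

/-- Zero-padding `v` into the first slot of `A × Aⁿ`. -/
def zpad (C : CDCData k) {Z A : C.Obj} : (n : ℕ) → C.Hom Z A → C.Hom Z (C.dom A n)
  | 0, v => v
  | n + 1, v => C.pair (zpad C n v) 0

/-- The `i`-th projection `A × Aⁿ → A`. -/
def projD (C : CDCData k) {A : C.Obj} : (n : ℕ) → Fin (n + 1) → C.Hom (C.dom A n) A
  | 0, _ => C.id A
  | n + 1, i => Fin.lastCases C.snd (fun j => C.comp (projD C n j) C.fst) i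

/-- The `2ⁿ`-fold product of `A`. -/
def twoPow (C : CDCData k) (A : C.Obj) : ℕ → C.Obj
  | 0 => A
  | n + 1 => C.prod (twoPow C A n) (twoPow C A n)

/-- Tupling of a family indexed by `Fin n → Bool` (characteristic functions of
subsets of `[n]`) into `A^(2ⁿ)`; the last bit is the outermost product factor. -/
def cube (C : CDCData k) {Z A : C.Obj} :
    (n : ℕ) → ((Fin n → Bool) → C.Hom Z A) → C.Hom Z (C.twoPow A n)
  | 0, x => x fun i => i.elim0
  | n + 1, x =>
      C.pair (cube C n fun b => x (Fin.snoc b false))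
        (cube C n fun b => x (Fin.snoc b true))

/-- The subset of `Fin n` with characteristic function `b`. -/
def bset {n : ℕ} (b : Fin n → Bool) : Finset (Fin n) :=
  Finset.univ.filter fun i => b i = true

end CDCData

variable (k)

/-- A (`k`-linear) cartesian differential category, presented via generalized
elements. -/
structure CDC extends CDCData k where
  id_comp : ∀ {A B} (f : Hom A B), comp (id B) f = f
  comp_id : ∀ {A B} (f : Hom A B), comp f (id A) = f
  comp_assoc : ∀ {A B C D} (h : Hom C D) (g : Hom B C) (f : Hom A B),
    comp (comp h g) f = comp h (comp g f)
  -- left `k`-linearity: precomposition is `k`-linear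
  add_comp : ∀ {A B C} (g h : Hom B C) (f : Hom A B),
    comp (g + h) f = comp g f + comp h f
  smul_comp : ∀ {A B C} (r : k) (g : Hom B C) (f : Hom A B),
    comp (r • g) f = r • comp g f
  zero_comp : ∀ {A B C} (f : Hom A B), comp (0 : Hom B C) f = (0 : Hom A C)
  -- cartesian structure
  toTerm_unique : ∀ {A} (f : Hom A term), f = toTerm A
  fst_pair : ∀ {Z A B} (f : Hom Z A) (g : Hom Z B), comp fst (pair f g) = f
  snd_pair : ∀ {Z A B} (f : Hom Z A) (g : Hom Z B), comp snd (pair f g) = g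
  pair_unique : ∀ {Z A B} (h : Hom Z (prod A B)), pair (comp fst h) (comp snd h) = h
  -- the projections are `k`-linear
  fst_comp_add : ∀ {Z A B} (x y : Hom Z (prod A B)),
    comp fst (x + y) = comp fst x + comp fst y
  fst_comp_smul : ∀ {Z A B} (r : k) (x : Hom Z (prod A B)),
    comp fst (r • x) = r • comp fst x
  snd_comp_add : ∀ {Z A B} (x y : Hom Z (prod A B)),
    comp snd (x + y) = comp snd x + comp snd y
  snd_comp_smul : ∀ {Z A B} (r : k) (x : Hom Z (prod A B)),
    comp snd (r • x) = r • comp snd x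
  -- the differential operator
  D : ∀ {A B}, Hom A B → Hom (prod A A) B
  -- (i) D is k-linear
  D_add : ∀ {A B} (f g : Hom A B), D (f + g) = D f + D g
  D_smul : ∀ {A B} (r : k) (f : Hom A B), D (r • f) = r • D f
  -- (ii) D f is k-linear in its second argument
  D_arg_add : ∀ {Z A B} (f : Hom A B) (x u v : Hom Z A),
    comp (D f) (pair x (u + v)) = comp (D f) (pair x u) + comp (D f) (pair x v)
  D_arg_smul : ∀ {Z A B} (f : Hom A B) (r : k) (x u : Hom Z A),
    comp (D f) (pair x (r • u)) = r • comp (D f) (pair x u)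
  -- (iii) D of projections
  D_fst : ∀ {A B}, D (fst (A := A) (B := B)) = comp fst snd
  D_snd : ∀ {A B}, D (snd (A := A) (B := B)) = comp snd snd
  -- (iv) D of identities
  D_id : ∀ {A}, D (id A) = snd
  -- (v) the chain rule
  D_comp : ∀ {A B C} (g : Hom B C) (f : Hom A B),
    D (comp g f) = comp (D g) (pair (comp f fst) (D f))
  -- (vi) D f is D-linear in its first argument
  D_lin : ∀ {Z A B} (f : Hom A B) (x r v : Hom Z A),
    comp (D (D f)) (pair (pair x r) (pair 0 v)) = comp (D f) (pair x v)
  -- (vii) symmetry of the second derivative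
  D_sym : ∀ {Z A B} (f : Hom A B) (x r s : Hom Z A),
    comp (D (D f)) (pair (pair x r) (pair s 0)) =
      comp (D (D f)) (pair (pair x s) (pair r 0))

variable {k}

namespace CDC

/-- The `n`-th derivative `f⁽ⁿ⁾ = (D₁)ⁿ f : A × Aⁿ → B`. -/
def fDeriv (C : CDC k) {A B : C.Obj} (f : C.Hom A B) :
    (n : ℕ) → C.Hom (C.toCDCData.dom A n) B
  | 0 => f
  | n + 1 =>
      C.comp (C.D (fDeriv C f n)) (C.pair C.fst (C.toCDCData.zpad n C.snd))

/-- The iterated differential `Dⁿ f : A^(2ⁿ) → B`. -/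
def iterD (C : CDC k) {A B : C.Obj} (f : C.Hom A B) :
    (n : ℕ) → C.Hom (C.toCDCData.twoPow A n) B
  | 0 => f
  | n + 1 => C.D (iterD C f n)

/-- `f^{(I)}` for `I ⊆ [n]` (Definition 13). -/
def fIdx (C : CDC k) {A B : C.Obj} (f : C.Hom A B) (n : ℕ) (I : Finset (Fin n)) :
    C.Hom (C.toCDCData.dom A n) B :=
  C.comp (fDeriv C f I.card)
    (C.toCDCData.tupleD I.card
      (Fin.cases (C.toCDCData.projD n 0)
        fun j => C.toCDCData.projD n (Fin.succ ((I.orderIsoOfFin rfl j : Fin n)))))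


end CDC



/-! ### Auxiliary lemmas -/

attribute [reducible] CDCData.dom

universe v

namespace CDC

variable {k : Type u} [CommSemiring k]

section basic

variable (C : CDC k) {Z W A B A' B' : C.Obj}

lemma comp_pair (f : C.Hom W A) (g : C.Hom W B) (h : C.Hom Z W) :
    C.comp (C.pair f g) h = C.pair (C.comp f h) (C.comp g h) := by
  conv_lhs => rw [← C.pair_unique (C.comp (C.pair f g) h)]
  rw [← C.comp_assoc, ← C.comp_assoc, C.fst_pair, C.snd_pair]

lemma fst_comp_zero : C.comp C.fst (0 : C.Hom Z (C.prod A B)) = 0 := by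
  have h : (0 : C.Hom Z (C.prod A B)) = (0 : k) • 0 := (zero_smul k _).symm
  rw [h, C.fst_comp_smul, zero_smul]

lemma snd_comp_zero : C.comp C.snd (0 : C.Hom Z (C.prod A B)) = 0 := by
  have h : (0 : C.Hom Z (C.prod A B)) = (0 : k) • 0 := (zero_smul k _).symm
  rw [h, C.snd_comp_smul, zero_smul]

lemma zero_pair : (0 : C.Hom Z (C.prod A B)) = C.pair 0 0 := by
  conv_lhs => rw [← C.pair_unique (0 : C.Hom Z (C.prod A B))]
  rw [fst_comp_zero, snd_comp_zero]

lemma pair_add (f f' : C.Hom Z A) (g g' : C.Hom Z B) :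
    C.pair f g + C.pair f' g' = C.pair (f + f') (g + g') := by
  conv_lhs => rw [← C.pair_unique (C.pair f g + C.pair f' g')]
  rw [C.fst_comp_add, C.snd_comp_add, C.fst_pair, C.snd_pair, C.fst_pair, C.snd_pair]

lemma D_zero : C.D (0 : C.Hom A B) = 0 := by
  have h : (0 : C.Hom A B) = (0 : k) • 0 := (zero_smul k _).symm
  rw [h, C.D_smul, zero_smul]

lemma D_arg_zero (f : C.Hom A B) (x : C.Hom Z A) :
    C.comp (C.D f) (C.pair x 0) = 0 := by
  have h : (0 : C.Hom Z A) = (0 : k) • 0 := (zero_smul k _).symm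
  rw [h, C.D_arg_smul, zero_smul]

lemma D_pair (f : C.Hom A B) (g : C.Hom A B') :
    C.D (C.pair f g) = C.pair (C.D f) (C.D g) := by
  have hf : C.D f = C.comp C.fst (C.D (C.pair f g)) := by
    have h := C.D_comp (C.fst (A := B) (B := B')) (C.pair f g)
    rw [C.fst_pair, C.D_fst, C.comp_assoc, C.snd_pair] at h
    exact h
  have hg : C.D g = C.comp C.snd (C.D (C.pair f g)) := by
    have h := C.D_comp (C.snd (A := B) (B := B')) (C.pair f g)
    rw [C.snd_pair, C.D_snd, C.comp_assoc, C.snd_pair] at h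
    exact h
  conv_lhs => rw [← C.pair_unique (C.D (C.pair f g))]
  rw [← hf, ← hg]

lemma comp_assoc' {A B W V : C.Obj} (h : C.Hom W V) (g : C.Hom B W) (f : C.Hom A B) :
    C.comp (C.comp h g) f = C.comp h (C.comp g f) := C.comp_assoc h g f

lemma zero_comp' {A B W : C.Obj} (f : C.Hom A B) :
    C.comp (0 : C.Hom B W) f = (0 : C.Hom A W) := C.zero_comp f

lemma id_comp' {A B : C.Obj} (f : C.Hom A B) : C.comp (C.id B) f = f := C.id_comp f

lemma fst_pair' {Z' A' B'' : C.Obj} (f : C.Hom Z' A') (g : C.Hom Z' B'') :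
    C.comp C.fst (C.pair f g) = f := C.fst_pair f g

lemma snd_pair' {Z' A' B'' : C.Obj} (f : C.Hom Z' A') (g : C.Hom Z' B'') :
    C.comp C.snd (C.pair f g) = g := C.snd_pair f g

end basic

/-- A morphism is linear when its derivative is itself applied to the second slot. -/
def IsLin (C : CDC k) {A B : C.Obj} (h : C.Hom A B) : Prop :=
  C.D h = C.comp h C.snd

section lin

variable (C : CDC k) {Z W A B A' B' : C.Obj}

lemma lin_id : IsLin C (C.id A) := by
  unfold IsLin; rw [C.D_id, C.id_comp]

lemma lin_fst : IsLin C (C.fst (A := A) (B := B)) := C.D_fst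

lemma lin_snd : IsLin C (C.snd (A := A) (B := B)) := C.D_snd

lemma lin_zero : IsLin C (0 : C.Hom A B) := by
  unfold IsLin; rw [D_zero, C.zero_comp]

lemma lin_pair {f : C.Hom A B} {g : C.Hom A B'} (hf : IsLin C f) (hg : IsLin C g) :
    IsLin C (C.pair f g) := by
  unfold IsLin
  rw [D_pair, hf, hg, comp_pair]

lemma lin_comp {g : C.Hom A B} {f : C.Hom W A} (hg : IsLin C g) (hf : IsLin C f) :
    IsLin C (C.comp g f) := by
  unfold IsLin
  rw [C.D_comp, hg, hf, C.comp_assoc, C.snd_pair, ← C.comp_assoc]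

lemma D_comp_lin (g : C.Hom A B) (P : C.Hom W A) (hP : IsLin C P) :
    C.D (C.comp g P) =
      C.comp (C.D g) (C.pair (C.comp P C.fst) (C.comp P C.snd)) := by
  rw [C.D_comp, hP]

end lin

/-- `pad C n j : A → A^(n+1)` puts the input in slot `j` and `0` elsewhere. -/
def pad (C : CDC k) {A : C.Obj} : (n : ℕ) → Fin (n + 1) → C.Hom A (C.toCDCData.dom A n)
  | 0, _ => C.id A
  | n + 1, j => Fin.lastCases (C.pair 0 (C.id A)) (fun j' => C.pair (pad C n j') 0) j

/-- `repl C n j : A^(n+1) × A → A^(n+1)` replaces slot `j` with the last coordinate. -/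
def repl (C : CDC k) {A : C.Obj} :
    (n : ℕ) → Fin (n + 1) → C.Hom (C.prod (C.toCDCData.dom A n) A) (C.toCDCData.dom A n)
  | 0, _ => C.snd
  | n + 1, j =>
      Fin.lastCases (C.pair (C.comp C.fst C.fst) C.snd)
        (fun j' => C.pair (C.comp (repl C n j') (C.pair (C.comp C.fst C.fst) C.snd))
          (C.comp C.snd C.fst)) j

section padrepl

variable (C : CDC k) {Z A : C.Obj}

@[simp] lemma pad_zero' (j : Fin 1) : pad C (A := A) 0 j = C.id A := rfl

@[simp] lemma pad_last (n : ℕ) :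
    pad C (A := A) (n + 1) (Fin.last (n + 1)) = C.pair 0 (C.id A) := by
  simp [pad]

@[simp] lemma pad_castSucc (n : ℕ) (j : Fin (n + 1)) :
    pad C (A := A) (n + 1) j.castSucc = C.pair (pad C n j) 0 := by
  simp [pad]

@[simp] lemma repl_zero' (j : Fin 1) : repl C (A := A) 0 j = C.snd := rfl

@[simp] lemma repl_last (n : ℕ) :
    repl C (A := A) (n + 1) (Fin.last (n + 1)) =
      C.pair (C.comp C.fst C.fst) C.snd := by
  simp [repl]

@[simp] lemma repl_castSucc (n : ℕ) (j : Fin (n + 1)) :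
    repl C (A := A) (n + 1) j.castSucc =
      C.pair (C.comp (repl C n j) (C.pair (C.comp C.fst C.fst) C.snd))
        (C.comp C.snd C.fst) := by
  simp [repl]

lemma lin_pad (n : ℕ) (j : Fin (n + 1)) : IsLin C (pad C (A := A) n j) := by
  induction n with
  | zero => exact lin_id C
  | succ n ih =>
      induction j using Fin.lastCases with
      | last => rw [pad_last]; exact lin_pair C (lin_zero C) (lin_id C)
      | cast j' => rw [pad_castSucc]; exact lin_pair C (ih j') (lin_zero C)

lemma lin_repl (n : ℕ) (j : Fin (n + 1)) : IsLin C (repl C (A := A) n j) := by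
  induction n with
  | zero => exact lin_snd C
  | succ n ih =>
      induction j using Fin.lastCases with
      | last =>
          rw [repl_last]
          exact lin_pair C (lin_comp C (lin_fst C) (lin_fst C)) (lin_snd C)
      | cast j' =>
          rw [repl_castSucc]
          exact lin_pair C
            (lin_comp C (ih j')
              (lin_pair C (lin_comp C (lin_fst C) (lin_fst C)) (lin_snd C)))
            (lin_comp C (lin_snd C) (lin_fst C))

lemma pad_comp_zero (n : ℕ) (j : Fin (n + 1)) :
    C.comp (pad C n j) (0 : C.Hom Z A) = 0 := by
  induction n with
  | zero => rw [pad_zero', C.id_comp]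
  | succ n ih =>
      induction j using Fin.lastCases with
      | last => rw [pad_last, comp_pair, C.zero_comp, C.id_comp, ← zero_pair]
      | cast j' => rw [pad_castSucc, comp_pair, C.zero_comp, ih, ← zero_pair]

lemma pad_zero_comp (n : ℕ) (v : C.Hom Z A) :
    C.comp (pad C n 0) v = C.toCDCData.zpad n v := by
  induction n with
  | zero => rw [pad_zero', C.id_comp]; rfl
  | succ n ih =>
      rw [show (0 : Fin (n + 2)) = (0 : Fin (n + 1)).castSucc from rfl,
        pad_castSucc, comp_pair, C.zero_comp, ih]
      rfl

lemma update_castSucc {α : Type*} {n : ℕ} (x : Fin (n + 2) → α) (j : Fin (n + 1)) (v : α) :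
    (fun i : Fin (n + 1) => Function.update x j.castSucc v i.castSucc) =
      Function.update (fun i : Fin (n + 1) => x i.castSucc) j v := by
  funext i
  rcases eq_or_ne i j with rfl | h
  · simp
  · rw [Function.update_of_ne (fun H => h (Fin.castSucc_inj.mp H)),
      Function.update_of_ne h]

lemma repl_tupleD (n : ℕ) (j : Fin (n + 1)) (x : Fin (n + 1) → C.Hom Z A)
    (v : C.Hom Z A) :
    C.comp (repl C n j) (C.pair (C.toCDCData.tupleD n x) v) =
      C.toCDCData.tupleD n (Function.update x j v) := by
  induction n generalizing v with
  | zero =>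
      rw [Subsingleton.elim (α := Fin 1) j 0, repl_zero', C.snd_pair]
      show v = Function.update x 0 v 0
      rw [Function.update_self]
  | succ n ih =>
      show C.comp (repl C (n+1) j)
          (C.pair (C.pair (C.toCDCData.tupleD n fun i => x i.castSucc)
            (x (Fin.last (n+1)))) v) = _
      induction j using Fin.lastCases with
      | last =>
          rw [repl_last, comp_pair, comp_assoc' C, fst_pair' C, C.fst_pair, C.snd_pair]
          show _ = C.pair (C.toCDCData.tupleD n fun i =>
              Function.update x (Fin.last (n+1)) v i.castSucc)
            (Function.update x (Fin.last (n+1)) v (Fin.last (n+1)))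
          rw [Function.update_self]
          congr 1
          congr 1
          funext i
          rw [Function.update_of_ne (Fin.castSucc_lt_last i).ne]
      | cast j' =>
          rw [repl_castSucc, comp_pair, C.comp_assoc, comp_pair, C.comp_assoc,
            C.fst_pair, C.fst_pair, C.snd_pair, C.comp_assoc, C.fst_pair,
            C.snd_pair, ih]
          show _ = C.pair (C.toCDCData.tupleD n fun i =>
              Function.update x j'.castSucc v i.castSucc)
            (Function.update x j'.castSucc v (Fin.last (n+1)))
          rw [Function.update_of_ne (Fin.castSucc_lt_last j').ne', update_castSucc]
end padrepl



section sums

variable (C : CDC k) {Z A B : C.Obj}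

lemma sum_pair {ι : Type v} (s : Finset ι) (a : ι → C.Hom Z A) (b : ι → C.Hom Z B) :
    ∑ j ∈ s, C.pair (a j) (b j) = C.pair (∑ j ∈ s, a j) (∑ j ∈ s, b j) := by
  induction s using Finset.cons_induction with
  | empty => rw [Finset.sum_empty, Finset.sum_empty, Finset.sum_empty]; exact zero_pair C
  | cons a' s' ha ih =>
      rw [Finset.sum_cons, Finset.sum_cons, Finset.sum_cons, ih, pair_add]

lemma tupleD_eq_sum (n : ℕ) (y : Fin (n + 1) → C.Hom Z A) :
    C.toCDCData.tupleD n y = ∑ j, C.comp (pad C n j) (y j) := by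
  induction n with
  | zero =>
      rw [Fin.sum_univ_succ, Finset.univ_eq_empty, Finset.sum_empty, add_zero,
        pad_zero', C.id_comp]
      rfl
  | succ n ih =>
      rw [Fin.sum_univ_castSucc]
      simp only [pad_castSucc, pad_last, comp_pair, zero_comp', id_comp']
      rw [sum_pair, Finset.sum_const_zero, pair_add, add_zero, zero_add, ← ih]
      rfl

lemma tupleD_snoc (n : ℕ) (x : Fin (n + 1) → C.Hom Z A) (v : C.Hom Z A) :
    C.toCDCData.tupleD (n + 1) (Fin.snoc x v) = C.pair (C.toCDCData.tupleD n x) v := by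
  have h1 : (fun i : Fin (n + 1) =>
      (Fin.snoc x v : Fin (n + 2) → C.Hom Z A) i.castSucc) = x :=
    funext fun i => by simp
  calc C.toCDCData.tupleD (n + 1) (Fin.snoc x v)
      = C.pair (C.toCDCData.tupleD n fun i =>
          (Fin.snoc x v : Fin (n + 2) → C.Hom Z A) i.castSucc)
          ((Fin.snoc x v : Fin (n + 2) → C.Hom Z A) (Fin.last (n + 1))) := rfl
    _ = C.pair (C.toCDCData.tupleD n x) v := by rw [h1, Fin.snoc_last]

lemma D_arg_sum {ι : Type v} (f : C.Hom A B) (x : C.Hom Z A) (s : Finset ι)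
    (u : ι → C.Hom Z A) :
    C.comp (C.D f) (C.pair x (∑ j ∈ s, u j)) =
      ∑ j ∈ s, C.comp (C.D f) (C.pair x (u j)) := by
  induction s using Finset.cons_induction with
  | empty => rw [Finset.sum_empty, Finset.sum_empty, D_arg_zero]
  | cons a s ha ih => rw [Finset.sum_cons, Finset.sum_cons, C.D_arg_add, ih]

end sums

section main

variable (C : CDC k) {Z A B : C.Obj}

lemma fDeriv_succ (f : C.Hom A B) (n : ℕ) :
    C.fDeriv f (n + 1) = C.comp (C.D (C.fDeriv f n))
      (C.pair C.fst (C.comp (pad C n 0) C.snd)) := by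
  show C.comp (C.D (C.fDeriv f n)) (C.pair C.fst (C.toCDCData.zpad n C.snd)) = _
  rw [pad_zero_comp]

lemma repl_succ_zpad (n : ℕ) (j : Fin n) (w : C.Hom Z A) :
    C.comp (repl C n j.succ) (C.pair (C.comp (pad C n 0) w) 0) =
      C.comp (pad C n 0) w := by
  induction n with
  | zero => exact j.elim0
  | succ n ih =>
      rw [show (0 : Fin (n + 2)) = (0 : Fin (n + 1)).castSucc from rfl, pad_castSucc]
      induction j using Fin.lastCases with
      | last =>
          rw [Fin.succ_last, repl_last]
          simp only [comp_pair, comp_assoc', fst_pair', snd_pair', zero_comp']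
      | cast j' =>
          rw [Fin.succ_castSucc, repl_castSucc]
          simp only [comp_pair, comp_assoc', fst_pair', snd_pair', zero_comp']
          rw [ih]

lemma keyLin (f : C.Hom A B) :
    ∀ (n : ℕ) (j : Fin n),
      C.comp (C.D (C.fDeriv f n)) (C.pair C.fst (C.comp (pad C n j.succ) C.snd)) =
        C.comp (C.fDeriv f n) (repl C n j.succ) := by
  intro n
  induction n with
  | zero => exact fun j => j.elim0
  | succ n ih =>
      intro j
      have hP0 : IsLin C (C.pair (C.fst (A := C.toCDCData.dom A n) (B := A))
          (C.comp (pad C n 0) C.snd)) :=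
        lin_pair C (lin_fst C) (lin_comp C (lin_pad C n 0) (lin_snd C))
      rw [fDeriv_succ, D_comp_lin C _ _ hP0]
      induction j using Fin.lastCases with
      | last =>
          rw [Fin.succ_last]
          simp only [pad_last, repl_last, comp_pair, comp_assoc', fst_pair',
            snd_pair', zero_comp', id_comp', pad_comp_zero]
          rw [C.D_lin]
      | cast j' =>
          rw [Fin.succ_castSucc]
          simp only [pad_castSucc, repl_castSucc, comp_pair, comp_assoc', fst_pair',
            snd_pair', zero_comp', id_comp', pad_comp_zero]
          rw [C.D_sym]
          have hQ : IsLin C (C.pair (C.fst (A := C.toCDCData.dom A n) (B := A))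
              (C.comp (pad C n j'.succ) C.snd)) :=
            lin_pair C (lin_fst C) (lin_comp C (lin_pad C n j'.succ) (lin_snd C))
          have hR : IsLin C (repl C (A := A) n j'.succ) := lin_repl C n j'.succ
          have hD := congrArg C.D (ih j')
          rw [D_comp_lin C _ _ hQ, D_comp_lin C _ _ hR] at hD
          have h := congrArg (fun h : C.Hom
              (C.prod (C.prod (C.toCDCData.dom A n) A) (C.prod (C.toCDCData.dom A n) A)) B =>
            C.comp h
            (C.pair (C.pair (C.comp (C.fst (A := C.toCDCData.dom A n) (B := A)) C.fst) C.snd)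
              (C.pair (C.comp (pad C n 0) (C.comp C.snd C.fst)) 0))) hD
          simp only [comp_pair, comp_assoc', fst_pair', snd_pair', zero_comp', id_comp', pad_comp_zero] at h
          rw [repl_succ_zpad] at h
          exact h

end main

end CDC


/-!
STATEMENT 4: In a cartesian differential category,
`D(f⁽ⁿ⁾)(x₀,…,xₙ, y₀,…,yₙ) = f⁽ⁿ⁺¹⁾(x₀,…,xₙ,y₀) + ∑_{i=1}^{n}
f⁽ⁿ⁾(x₀,…,x_{i-1}, y_i, x_{i+1},…,xₙ)` for any `x, y : X → A` (families of
`n+1` generalized elements).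
-/
theorem statement4 {k : Type u} [CommSemiring k] (C : CDC k)
    {A B : C.Obj} (f : C.Hom A B) (n : ℕ) (X : C.Obj)
    (x y : Fin (n + 1) → C.Hom X A) :
    C.comp (C.D (C.fDeriv f n))
        (C.pair (C.toCDCData.tupleD n x) (C.toCDCData.tupleD n y)) =
      C.comp (C.fDeriv f (n + 1)) (C.toCDCData.tupleD (n + 1) (Fin.snoc x (y 0)))
        + ∑ i : Fin n,
            C.comp (C.fDeriv f n)
              (C.toCDCData.tupleD n (Function.update x i.succ (y i.succ))) := by
  rw [CDC.tupleD_eq_sum C n y, CDC.D_arg_sum, Fin.sum_univ_succ]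
  congr 1
  · rw [CDC.tupleD_snoc C n x (y 0), CDC.fDeriv_succ]
    simp only [CDC.comp_assoc', CDC.comp_pair, CDC.fst_pair', CDC.snd_pair']
  · refine Finset.sum_congr rfl fun i _ => ?_
    have h := congrArg (fun q : C.Hom (C.prod (C.toCDCData.dom A n) A) B =>
        C.comp q (C.pair (C.toCDCData.tupleD n x) (y i.succ))) (CDC.keyLin C f n i)
    simp only [CDC.comp_pair, CDC.comp_assoc', CDC.fst_pair', CDC.snd_pair'] at h
    rw [CDC.repl_tupleD] at h
    exact h
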